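/- Let M = ([n], r) be an avoidance transversal matroid with presentation (S_1,…,S_k), and let φ(M) be the transversal q-matroid on F_q^n with presentation (φ(S_1),…,φ(S_k)) with rank function ρ. If X ⊆ [n] is not a flat of M, then φ(X) is not a flat of φ(M); specifically there exists j ∉ X with ρ(φ(X) + span(e_j)) = ρ(φ(X)). -/

import Mathlib

open Submodule

/-- `X` has an avoidance transversal of the family `A`: an injection `f` from `X`
into the index type with `x ∉ A (f x)` for all `x ∈ X`. -/
def AvoidsT {α ι : Type*} (A : ι → Set α) (X : Finset α) : Prop :=
  ∃ f : {x // x ∈ X} → ι, Function.Injective f ∧ ∀ x : {x // x ∈ X}, (x : α) ∉ A (f x)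

/-- The rank function of the avoidance transversal matroid with presentation `A`:
the maximum size of a subset of `X` admitting an avoidance transversal. -/
noncomputable def atRank {α ι : Type*} (A : ι → Set α) (X : Finset α) : ℕ :=
  sSup {m | ∃ Y : Finset α, Y ⊆ X ∧ AvoidsT A Y ∧ Y.card = m}

/-- `W` is a partial q-transversal of the family of subspaces `X`: every linear
basis of `W` admits an avoidance transversal of `X`. These are the independent
spaces of the transversal q-matroid with presentation `X`. -/
def IsPartialQT {𝔽 V ι : Type*} [Field 𝔽] [AddCommGroup V] [Module 𝔽 V]
    (X : ι → Submodule 𝔽 V) (W : Submodule 𝔽 V) : Prop :=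
  ∀ β : Finset V, (β : Set V) ⊆ (W : Set V) →
    LinearIndependent 𝔽 (fun b : {x // x ∈ β} => (b : V)) →
    span 𝔽 (β : Set V) = W →
    AvoidsT (fun i => ((X i : Submodule 𝔽 V) : Set V)) β

/-- The rank function of the transversal q-matroid with presentation `X`. -/
noncomputable def qtRank {𝔽 V ι : Type*} [Field 𝔽] [AddCommGroup V] [Module 𝔽 V]
    (X : ι → Submodule 𝔽 V) (W : Submodule 𝔽 V) : ℕ :=
  sSup {d | ∃ U : Submodule 𝔽 V, U ≤ W ∧ IsPartialQT X U ∧ Module.finrank 𝔽 U = d}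

/-- The coordinate subspace `φ(S) = span {e_i : i ∈ S}` of `𝔽^n`. -/
def coordSub (𝔽 : Type*) [Field 𝔽] {n : ℕ} (S : Set (Fin n)) : Submodule 𝔽 (Fin n → 𝔽) :=
  span 𝔽 ((fun i => Pi.single i (1 : 𝔽)) '' S)

/-- The support of a vector: the set of indices of its nonzero coordinates. -/
def suppS {𝔽 : Type*} [Field 𝔽] {n : ℕ} (v : Fin n → 𝔽) : Set (Fin n) := {j | v j ≠ 0}

section Aux

variable {𝔽 : Type*} [Field 𝔽] {n : ℕ}

lemma mem_coordSub_iff {T : Set (Fin n)} {v : Fin n → 𝔽} :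
    v ∈ coordSub 𝔽 T ↔ ∀ i ∉ T, v i = 0 := by
  constructor
  · intro hv i hi
    have hle : coordSub 𝔽 T ≤ LinearMap.ker (LinearMap.proj i : (Fin n → 𝔽) →ₗ[𝔽] 𝔽) := by
      rw [coordSub, span_le]
      rintro _ ⟨j, hj, rfl⟩
      simp only [SetLike.mem_coe, LinearMap.mem_ker, LinearMap.proj_apply]
      exact Pi.single_eq_of_ne (fun h : i = j => hi (h ▸ hj)) 1
    exact hle hv
  · intro h
    have hv : v = ∑ i : Fin n, Pi.single i (v i) := (Finset.univ_sum_single v).symm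
    rw [hv]
    apply sum_mem
    intro i _
    by_cases hi : i ∈ T
    · have : (Pi.single i (v i) : Fin n → 𝔽) = (v i) • (Pi.single i (1 : 𝔽) : Fin n → 𝔽) := by
        rw [← Pi.single_smul, smul_eq_mul, mul_one]
      rw [this]
      exact smul_mem _ _ (subset_span ⟨i, hi, rfl⟩)
    · have h0 : (Pi.single i (v i) : Fin n → 𝔽) = 0 := by
        rw [h i hi]; ext j; simp
      rw [h0]; exact zero_mem _

lemma coordSub_mono {T T' : Set (Fin n)} (h : T ⊆ T') : coordSub 𝔽 T ≤ coordSub 𝔽 T' :=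
  span_mono (Set.image_mono h)

lemma single_li (T : Set (Fin n)) :
    LinearIndependent 𝔽 (fun i : T => (Pi.single (i : Fin n) (1 : 𝔽) : Fin n → 𝔽)) := by
  have h := (Pi.basisFun 𝔽 (Fin n)).linearIndependent.comp
    (fun i : T => (i : Fin n)) Subtype.val_injective
  have he : (fun i : T => (Pi.single (i : Fin n) (1 : 𝔽) : Fin n → 𝔽))
      = (⇑(Pi.basisFun 𝔽 (Fin n)) ∘ fun i : T => (i : Fin n)) := by
    funext i; simp [Pi.basisFun_apply]
  rw [he]; exact h

lemma single_li' (T : Finset (Fin n)) :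
    LinearIndependent 𝔽 (fun i : {x // x ∈ T} => (Pi.single (i : Fin n) (1 : 𝔽) : Fin n → 𝔽)) := by
  have h := (Pi.basisFun 𝔽 (Fin n)).linearIndependent.comp
    (fun i : {x // x ∈ T} => (i : Fin n)) Subtype.val_injective
  have he : (fun i : {x // x ∈ T} => (Pi.single (i : Fin n) (1 : 𝔽) : Fin n → 𝔽))
      = (⇑(Pi.basisFun 𝔽 (Fin n)) ∘ fun i : {x // x ∈ T} => (i : Fin n)) := by
    funext i; simp [Pi.basisFun_apply]
  rw [he]; exact h

lemma finrank_coordSub (T : Finset (Fin n)) :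
    Module.finrank 𝔽 (coordSub 𝔽 (T : Set (Fin n))) = T.card := by
  have h1 : coordSub 𝔽 (T : Set (Fin n))
      = span 𝔽 (Set.range fun i : {x // x ∈ T} => (Pi.single (i : Fin n) (1 : 𝔽) : Fin n → 𝔽)) := by
    rw [coordSub]
    congr 1
    ext v
    constructor
    · rintro ⟨j, hj, rfl⟩; exact ⟨⟨j, hj⟩, rfl⟩
    · rintro ⟨⟨j, hj⟩, rfl⟩; exact ⟨j, hj, rfl⟩
  rw [h1]
  have h : LinearIndependent 𝔽
      (fun i : {x // x ∈ T} => (Pi.single (i : Fin n) (1 : 𝔽) : Fin n → 𝔽)) := single_li' T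
  exact (finrank_span_eq_card h).trans (Fintype.card_coe T)

lemma coordSub_insert (j : Fin n) (X : Set (Fin n)) :
    coordSub 𝔽 (insert j X) = coordSub 𝔽 X ⊔ span 𝔽 {Pi.single j (1 : 𝔽)} := by
  rw [coordSub, Set.image_insert_eq, span_insert, coordSub, sup_comm]

lemma avoidsT_empty {α ι : Type*} (A : ι → Set α) : AvoidsT A (∅ : Finset α) :=
  ⟨fun x => absurd x.2 (Finset.notMem_empty _),
   fun a => absurd a.2 (Finset.notMem_empty _),
   fun x => absurd x.2 (Finset.notMem_empty _)⟩

lemma le_atRank {α ι : Type*} (A : ι → Set α) {X Z : Finset α} (hZX : Z ⊆ X)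
    (h : AvoidsT A Z) : Z.card ≤ atRank A X :=
  le_csSup ⟨X.card, fun _ ⟨_, hY, _, hm⟩ => hm ▸ Finset.card_le_card hY⟩ ⟨Z, hZX, h, rfl⟩

lemma atRank_le {α ι : Type*} {A : ι → Set α} {X : Finset α} {m : ℕ}
    (h : ∀ Z ⊆ X, AvoidsT A Z → Z.card ≤ m) : atRank A X ≤ m := by
  have hne : {m | ∃ Y : Finset α, Y ⊆ X ∧ AvoidsT A Y ∧ Y.card = m}.Nonempty :=
    ⟨0, ∅, Finset.empty_subset X, avoidsT_empty A, Finset.card_empty⟩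
  apply csSup_le hne
  rintro d ⟨Z, hZX, hav, rfl⟩
  exact h Z hZX hav

section QT
variable {𝔽 V ι : Type*} [Field 𝔽] [AddCommGroup V] [Module 𝔽 V]

lemma isPartialQT_bot (X : ι → Submodule 𝔽 V) : IsPartialQT X (⊥ : Submodule 𝔽 V) := by
  intro β hβ hli _
  have hβe : β = ∅ := by
    apply Finset.eq_empty_of_forall_notMem
    intro x hx
    exact hli.ne_zero ⟨x, hx⟩ ((mem_bot 𝔽).mp (hβ (Finset.mem_coe.mpr hx)))
  subst hβe
  exact avoidsT_empty _

variable [FiniteDimensional 𝔽 V] {X : ι → Submodule 𝔽 V}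

lemma qtRank_bddAbove (X : ι → Submodule 𝔽 V) (W : Submodule 𝔽 V) :
    BddAbove {d | ∃ U : Submodule 𝔽 V, U ≤ W ∧ IsPartialQT X U ∧ Module.finrank 𝔽 U = d} :=
  ⟨Module.finrank 𝔽 V, fun _ ⟨U, _, _, hd⟩ => hd ▸ Submodule.finrank_le U⟩

lemma qtRank_nonempty (X : ι → Submodule 𝔽 V) (W : Submodule 𝔽 V) :
    {d | ∃ U : Submodule 𝔽 V, U ≤ W ∧ IsPartialQT X U ∧ Module.finrank 𝔽 U = d}.Nonempty :=
  ⟨0, ⊥, bot_le, isPartialQT_bot X, finrank_bot 𝔽 V⟩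

lemma le_qtRank {W U : Submodule 𝔽 V} (hUW : U ≤ W) (h : IsPartialQT X U) :
    Module.finrank 𝔽 U ≤ qtRank X W :=
  le_csSup (qtRank_bddAbove X W) ⟨U, hUW, h, rfl⟩

lemma qtRank_mono {W W' : Submodule 𝔽 V} (h : W ≤ W') : qtRank X W ≤ qtRank X W' :=
  csSup_le_csSup (qtRank_bddAbove X W') (qtRank_nonempty X W)
    (fun _ ⟨U, hUW, hq, hd⟩ => ⟨U, le_trans hUW h, hq, hd⟩)

lemma qtRank_le {W : Submodule 𝔽 V} {m : ℕ}
    (h : ∀ U : Submodule 𝔽 V, U ≤ W → IsPartialQT X U → Module.finrank 𝔽 U ≤ m) :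
    qtRank X W ≤ m := by
  apply csSup_le (qtRank_nonempty X W)
  rintro d ⟨U, hUW, hq, rfl⟩
  exact h U hUW hq

end QT


section Main
variable {𝔽 : Type*} [Field 𝔽] {n k : ℕ}

lemma isPartialQT_coordSub (S : Fin k → Set (Fin n)) {Z : Finset (Fin n)}
    (hav : AvoidsT S Z) :
    IsPartialQT (fun i => coordSub 𝔽 (S i)) (coordSub 𝔽 (Z : Set (Fin n))) := by
  classical
  obtain ⟨g, hginj, hgav⟩ := hav
  intro β hβ hli hspan
  set t : {x // x ∈ β} → Finset (Fin n) :=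
    fun b => Finset.univ.filter (fun z => (b : Fin n → 𝔽) z ≠ 0) with ht
  have hsupp : ∀ b : {x // x ∈ β}, ∀ z : Fin n, (b : Fin n → 𝔽) z ≠ 0 → z ∈ Z := by
    intro b z hz
    by_contra hzZ
    exact hz (mem_coordSub_iff.mp (hβ (Finset.mem_coe.mpr b.2)) z (by simpa using hzZ))
  have hall : ∀ s : Finset {x // x ∈ β}, s.card ≤ (s.biUnion t).card := by
    intro s
    set J := s.biUnion t with hJ
    have hmemJ : ∀ x : {y // y ∈ s}, ((x : {x // x ∈ β}) : Fin n → 𝔽) ∈ coordSub 𝔽 (J : Set (Fin n)) := by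
      intro x
      rw [mem_coordSub_iff]
      intro i hi
      by_contra hne
      refine hi (Finset.mem_coe.mpr (Finset.mem_biUnion.mpr ⟨x, x.2, ?_⟩))
      rw [ht]
      exact Finset.mem_filter.mpr ⟨Finset.mem_univ _, hne⟩
    have hli2 : LinearIndependent 𝔽 (fun x : {y // y ∈ s} => ((x : {x // x ∈ β}) : Fin n → 𝔽)) :=
      hli.comp _ Subtype.val_injective
    have hli3 : LinearIndependent 𝔽 (fun x : {y // y ∈ s} =>
        (⟨((x : {x // x ∈ β}) : Fin n → 𝔽), hmemJ x⟩ : coordSub 𝔽 (J : Set (Fin n)))) := by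
      apply LinearIndependent.of_comp (coordSub 𝔽 (J : Set (Fin n))).subtype
      exact hli2
    have hc := hli3.fintype_card_le_finrank
    rw [finrank_coordSub J] at hc
    simpa using hc
  obtain ⟨h, hinj, hmem⟩ := (Finset.all_card_le_biUnion_card_iff_exists_injective t).mp hall
  have hne : ∀ b : {x // x ∈ β}, (b : Fin n → 𝔽) (h b) ≠ 0 := by
    intro b
    have hb := hmem b
    rw [ht] at hb
    simpa using (Finset.mem_filter.mp hb).2
  refine ⟨fun b => g ⟨h b, hsupp b (h b) (hne b)⟩, ?_, ?_⟩
  · intro b1 b2 heq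
    exact hinj (congrArg Subtype.val (hginj heq))
  · intro b hb
    exact hne b (mem_coordSub_iff.mp hb (h b) (hgav ⟨h b, hsupp b (h b) (hne b)⟩))

lemma atRank_le_qtRank (S : Fin k → Set (Fin n)) (Y : Finset (Fin n)) :
    atRank S Y ≤ qtRank (fun i => coordSub 𝔽 (S i)) (coordSub 𝔽 (Y : Set (Fin n))) := by
  apply atRank_le
  intro Z hZY hav
  have hle : coordSub 𝔽 (Z : Set (Fin n)) ≤ coordSub 𝔽 (Y : Set (Fin n)) :=
    coordSub_mono (by exact_mod_cast hZY)
  have hq := le_qtRank hle (isPartialQT_coordSub S hav)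
  rwa [finrank_coordSub] at hq

lemma qtRank_le_atRank [Fintype 𝔽] (S : Fin k → Set (Fin n)) (Y : Finset (Fin n)) :
    qtRank (fun i => coordSub 𝔽 (S i)) (coordSub 𝔽 (Y : Set (Fin n))) ≤ atRank S Y := by
  classical
  apply qtRank_le
  intro U hUW hPQT
  by_contra hgt
  push_neg at hgt
  set d := Module.finrank 𝔽 U with hd
  have hdY : d ≤ Y.card := by
    have h1 := Submodule.finrank_mono hUW
    rwa [finrank_coordSub] at h1
  set r := Y.card - d with hr
  set t' : {y // y ∈ Y} → Finset (Fin k ⊕ Fin r) := fun y =>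
    ((Finset.univ.filter (fun i : Fin k => (y : Fin n) ∉ S i)).image Sum.inl) ∪
    (Finset.univ.image Sum.inr) with ht'
  by_cases hall : ∀ s : Finset {y // y ∈ Y}, s.card ≤ (s.biUnion t').card
  · -- Hall condition holds : build an avoiding subset of size ≥ d, contradicting hgt
    obtain ⟨f', hf'inj, hf'mem⟩ :=
      (Finset.all_card_le_biUnion_card_iff_exists_injective t').mp hall
    set L := Finset.univ.filter (fun y : {y // y ∈ Y} => (f' y).isLeft) with hL
    set Z := L.image (Subtype.val) with hZdef
    have hZY : Z ⊆ Y := by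
      intro z hz
      rw [hZdef] at hz
      obtain ⟨y, _, rfl⟩ := Finset.mem_image.mp hz
      exact y.2
    have key : ∀ x : Fin n, x ∈ Z → ∃ hx : x ∈ Y, (f' ⟨x, hx⟩).isLeft := by
      intro x hx
      rw [hZdef] at hx
      obtain ⟨y, hy, rfl⟩ := Finset.mem_image.mp hx
      rw [hL] at hy
      exact ⟨y.2, (Finset.mem_filter.mp hy).2⟩
    have hav : AvoidsT S Z := by
      refine ⟨fun x => (f' ⟨(x : Fin n), (key x x.2).choose⟩).getLeft
        (key x x.2).choose_spec, ?_, ?_⟩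
      · intro x1 x2 heq
        obtain ⟨i1, e1⟩ := Sum.isLeft_iff.mp (key x1 x1.2).choose_spec
        obtain ⟨i2, e2⟩ := Sum.isLeft_iff.mp (key x2 x2.2).choose_spec
        simp only [e1, e2, Sum.getLeft_inl] at heq
        have he : f' ⟨(x1 : Fin n), (key x1 x1.2).choose⟩
            = f' ⟨(x2 : Fin n), (key x2 x2.2).choose⟩ := by
          rw [e1, e2, heq]
        have := congrArg Subtype.val (hf'inj he)
        exact Subtype.ext this
      · intro x hx
        obtain ⟨i, e⟩ := Sum.isLeft_iff.mp (key x x.2).choose_spec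
        have hm := hf'mem ⟨(x : Fin n), (key x x.2).choose⟩
        rw [ht', e] at hm
        simp only [e, Sum.getLeft_inl] at hx
        rcases Finset.mem_union.mp hm with h | h
        · obtain ⟨i', hi', hee⟩ := Finset.mem_image.mp h
          have hii : i' = i := Sum.inl.inj hee
          subst hii
          exact (Finset.mem_filter.mp hi').2 hx
        · obtain ⟨j, _, hee⟩ := Finset.mem_image.mp h
          exact absurd hee (by simp)
    have hcardZ : Z.card = L.card := Finset.card_image_of_injective L Subtype.val_injective
    have hsplit : L.card
        + (Finset.univ.filter (fun y : {y // y ∈ Y} => ¬ (f' y).isLeft)).card = Y.card := by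
      rw [hL, Finset.card_filter_add_card_filter_not, Finset.card_univ, Fintype.card_coe]
    have hRle : (Finset.univ.filter (fun y : {y // y ∈ Y} => ¬ (f' y).isLeft)).card ≤ r := by
      set R := Finset.univ.filter (fun y : {y // y ∈ Y} => ¬ (f' y).isLeft) with hR
      have himg : R.image f' ⊆ Finset.univ.image (Sum.inr : Fin r → Fin k ⊕ Fin r) := by
        intro a ha
        obtain ⟨y, hy, rfl⟩ := Finset.mem_image.mp ha
        rw [hR] at hy
        obtain ⟨j, e⟩ := Sum.isRight_iff.mp (Sum.not_isLeft.mp (Finset.mem_filter.mp hy).2)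
        rw [e]
        exact Finset.mem_image.mpr ⟨j, Finset.mem_univ _, rfl⟩
      have h1 : (R.image f').card = R.card := Finset.card_image_of_injective R hf'inj
      have h2 : (Finset.univ.image (Sum.inr : Fin r → Fin k ⊕ Fin r)).card = r := by
        rw [Finset.card_image_of_injective _ Sum.inr_injective, Finset.card_univ, Fintype.card_fin]
      calc R.card = (R.image f').card := h1.symm
        _ ≤ _ := Finset.card_le_card himg
        _ = r := h2
    have hZd : d ≤ Z.card := by omega
    have := le_atRank S hZY hav
    omega
  · -- Hall condition fails : linear-algebra contradiction
    push_neg at hall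
    obtain ⟨s, hs⟩ := hall
    have hsne : s.Nonempty := by
      rcases Finset.eq_empty_or_nonempty s with rfl | h
      · simp at hs
      · exact h
    set T := s.image Subtype.val with hT
    have hTY : T ⊆ Y := by
      intro x hx
      rw [hT] at hx
      obtain ⟨y, _, rfl⟩ := Finset.mem_image.mp hx
      exact y.2
    have hTcard : T.card = s.card := Finset.card_image_of_injective s Subtype.val_injective
    set N := Finset.univ.filter (fun i : Fin k => ∃ y ∈ T, y ∉ S i) with hN
    have hbi : s.biUnion t' = (N.image Sum.inl) ∪ (Finset.univ.image (Sum.inr : Fin r → _)) := by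
      ext a
      constructor
      · intro ha
        obtain ⟨y, hy, hat⟩ := Finset.mem_biUnion.mp ha
        rw [ht'] at hat
        rcases Finset.mem_union.mp hat with h | h
        · obtain ⟨i, hi, rfl⟩ := Finset.mem_image.mp h
          refine Finset.mem_union_left _ (Finset.mem_image.mpr ⟨i, ?_, rfl⟩)
          rw [hN]
          refine Finset.mem_filter.mpr ⟨Finset.mem_univ _, ⟨(y : Fin n), ?_, (Finset.mem_filter.mp hi).2⟩⟩
          rw [hT]
          exact Finset.mem_image.mpr ⟨y, hy, rfl⟩
        · exact Finset.mem_union_right _ h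
      · intro ha
        obtain ⟨y0, hy0⟩ := hsne
        rcases Finset.mem_union.mp ha with h | h
        · obtain ⟨i, hi, rfl⟩ := Finset.mem_image.mp h
          rw [hN] at hi
          obtain ⟨x, hxT, hxS⟩ := (Finset.mem_filter.mp hi).2
          rw [hT] at hxT
          obtain ⟨y, hy, rfl⟩ := Finset.mem_image.mp hxT
          refine Finset.mem_biUnion.mpr ⟨y, hy, ?_⟩
          rw [ht']
          exact Finset.mem_union_left _ (Finset.mem_image.mpr
            ⟨i, Finset.mem_filter.mpr ⟨Finset.mem_univ _, hxS⟩, rfl⟩)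
        · refine Finset.mem_biUnion.mpr ⟨y0, hy0, ?_⟩
          rw [ht']
          exact Finset.mem_union_right _ h
    have hbicard : (s.biUnion t').card = N.card + r := by
      rw [hbi, Finset.card_union_of_disjoint, Finset.card_image_of_injective _ Sum.inl_injective,
        Finset.card_image_of_injective _ Sum.inr_injective, Finset.card_univ, Fintype.card_fin]
      · rw [Finset.disjoint_left]
        rintro a ha hb
        obtain ⟨i, _, rfl⟩ := Finset.mem_image.mp ha
        obtain ⟨j, _, hee⟩ := Finset.mem_image.mp hb
        exact absurd hee (by simp)
    have hcount : N.card + r < T.card := by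
      rw [hTcard]
      omega
    -- now linear algebra
    set WT := coordSub 𝔽 (T : Set (Fin n)) with hWT
    obtain ⟨b, hbsub, hbspan, hbli⟩ :=
      exists_linearIndependent 𝔽 ((U ⊓ WT : Submodule 𝔽 (Fin n → 𝔽)) : Set (Fin n → 𝔽))
    have hbspan' : span 𝔽 b = U ⊓ WT := by rw [hbspan, span_eq]
    have hbU : b ⊆ (U : Set (Fin n → 𝔽)) := fun x hx => (inf_le_left : U ⊓ WT ≤ U) (hbsub hx)
    obtain ⟨c, hcU, hbc, hUsub, hcli⟩ := exists_linearIndepOn_id_extension hbli hbU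
    have hspanc : span 𝔽 c = U := le_antisymm (span_le.mpr hcU) hUsub
    have hcfin : c.Finite := Set.toFinite c
    set β := hcfin.toFinset with hβdef
    have hβc : (β : Set (Fin n → 𝔽)) = c := Set.Finite.coe_toFinset _
    have hliβ : LinearIndependent 𝔽 (fun x : {v // v ∈ β} => (x : Fin n → 𝔽)) := by
      have h1 : LinearIndependent 𝔽 (fun x : (β : Set (Fin n → 𝔽)) => (x : Fin n → 𝔽)) := by
        rw [hβc]; exact hcli
      exact h1
    obtain ⟨f, hfinj, hfav⟩ := hPQT β (by rw [hβc]; exact hcU) hliβ (by rw [hβc]; exact hspanc)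
    -- bound finrank (U ⊓ WT) by N.card
    haveI : Fintype ↥b := hcfin.subset hbc |>.fintype
    have hfrb : Module.finrank 𝔽 (U ⊓ WT : Submodule 𝔽 (Fin n → 𝔽)) = Fintype.card ↥b := by
      rw [← hbspan', finrank_span_set_eq_card hbli, Set.toFinset_card]
    have hbmemβ : ∀ x : Fin n → 𝔽, x ∈ b → x ∈ β := by
      intro x hx
      rw [hβdef, Set.Finite.mem_toFinset]
      exact hbc hx
    have hsuppT : ∀ x : Fin n → 𝔽, x ∈ b → ∀ z : Fin n, x z ≠ 0 → z ∈ T := by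
      intro x hx z hz
      by_contra hzT
      exact hz (mem_coordSub_iff.mp ((hbsub hx).2) z (by simpa using hzT))
    have hFmem : ∀ x : ↥b, f ⟨(x : Fin n → 𝔽), hbmemβ x x.2⟩ ∈ N := by
      intro x
      have hav := hfav ⟨(x : Fin n → 𝔽), hbmemβ x x.2⟩
      have hnot : ¬ ∀ i ∉ S (f ⟨(x : Fin n → 𝔽), hbmemβ x x.2⟩), (x : Fin n → 𝔽) i = 0 := by
        intro hco
        exact hav (mem_coordSub_iff.mpr hco)
      push_neg at hnot
      obtain ⟨z, hzS, hz0⟩ := hnot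
      rw [hN]
      exact Finset.mem_filter.mpr ⟨Finset.mem_univ _, ⟨z, hsuppT _ x.2 z hz0, hzS⟩⟩
    have hcardb : Fintype.card ↥b ≤ N.card := by
      have hFi : Function.Injective (fun x : ↥b => (⟨f ⟨(x : Fin n → 𝔽), hbmemβ x x.2⟩,
          hFmem x⟩ : {i // i ∈ N})) := by
        intro x1 x2 heq
        have h1 := congrArg Subtype.val heq
        have h2 := hfinj h1
        have h3 := congrArg (Subtype.val : {v // v ∈ β} → (Fin n → 𝔽)) h2
        exact Subtype.ext h3
      have := Fintype.card_le_of_injective _ hFi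
      rwa [Fintype.card_coe] at this
    have hinf : Module.finrank 𝔽 (U ⊓ WT : Submodule 𝔽 (Fin n → 𝔽)) ≤ N.card := by
      rw [hfrb]; exact hcardb
    have hsup : Module.finrank 𝔽 (U ⊔ WT : Submodule 𝔽 (Fin n → 𝔽)) ≤ Y.card := by
      have hle : U ⊔ WT ≤ coordSub 𝔽 (Y : Set (Fin n)) := by
        refine sup_le hUW ?_
        rw [hWT]
        exact coordSub_mono (by exact_mod_cast hTY)
      have h1 := Submodule.finrank_mono hle
      rwa [finrank_coordSub] at h1
    have heq := Submodule.finrank_sup_add_finrank_inf_eq U WT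
    have hfrT : Module.finrank 𝔽 WT = T.card := by rw [hWT]; exact finrank_coordSub T
    omega

end Main

end Aux

/-- if `X ⊆ [n]` is not a flat of the avoidance transversal matroid,
then `φ(X)` is not a flat of the corresponding transversal q-matroid: some `e_j`
with `j ∉ X` does not increase the rank of `φ(X)`. -/
theorem stmt8 {𝔽 : Type*} [Field 𝔽] [Fintype 𝔽] {n k : ℕ} [DecidableEq (Fin n)]
    (S : Fin k → Set (Fin n)) (X : Finset (Fin n))
    (hnotflat : ¬ ∀ j ∉ X, atRank S X < atRank S (insert j X)) :
    ∃ j ∉ X,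
      qtRank (fun i => coordSub 𝔽 (S i))
          (coordSub 𝔽 (X : Set (Fin n)) ⊔ span 𝔽 {Pi.single j (1 : 𝔽)})
        = qtRank (fun i => coordSub 𝔽 (S i)) (coordSub 𝔽 (X : Set (Fin n))) := by
  push_neg at hnotflat
  obtain ⟨j, hjX, hle⟩ := hnotflat
  refine ⟨j, hjX, ?_⟩
  have hsup : coordSub 𝔽 (X : Set (Fin n)) ⊔ span 𝔽 {Pi.single j (1 : 𝔽)}
      = coordSub 𝔽 ((insert j X : Finset (Fin n)) : Set (Fin n)) := by
    rw [Finset.coe_insert, coordSub_insert]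
    congr!
  apply le_antisymm
  · rw [hsup]
    calc qtRank (fun i => coordSub 𝔽 (S i)) (coordSub 𝔽 ((insert j X : Finset (Fin n)) : Set (Fin n)))
        ≤ atRank S (insert j X) := qtRank_le_atRank S (insert j X)
      _ ≤ atRank S X := hle
      _ ≤ qtRank (fun i => coordSub 𝔽 (S i)) (coordSub 𝔽 (X : Set (Fin n))) := atRank_le_qtRank S X
  · exact qtRank_mono le_sup_left
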